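/- Let ρ : Ω → ℝ be positive and twice differentiable with |∇ρ| ≤ C₁ and |∇²ρ| ≤ C₂·ρ^{-1} on Ω, and let h > 0 and ρ̃ = √(ρ² + h²). Then pointwise |∇²ρ̃(x)| ≤ c · ρ̃(x)^{-1} for a constant c depending only on C₁ and C₂. -/

import Mathlib

set_option maxHeartbeats 1000000

/-- If `ρ > 0` is twice differentiable on the open set `Ω` with
`|∇ρ| ≤ C₁` and `|∇²ρ| ≤ C₂ ρ⁻¹`, then for `ρ̃ = √(ρ² + h²)` one has
`|∇²ρ̃(x)| ≤ c ρ̃(x)⁻¹` on `Ω`, `c` depending only on `C₁, C₂`. -/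
theorem stmt3 (C₁ C₂ : ℝ) (hC₁ : 0 ≤ C₁) (hC₂ : 0 ≤ C₂) :
    ∃ c > (0 : ℝ), ∀ (Ω : Set (EuclideanSpace ℝ (Fin 3))), IsOpen Ω →
      ∀ (ρ : EuclideanSpace ℝ (Fin 3) → ℝ) (h : ℝ), 0 < h →
      (∀ x ∈ Ω, 0 < ρ x) →
      (∀ x ∈ Ω, DifferentiableAt ℝ ρ x) →
      (∀ x ∈ Ω, DifferentiableAt ℝ (fderiv ℝ ρ) x) →
      (∀ x ∈ Ω, ‖fderiv ℝ ρ x‖ ≤ C₁) →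
      (∀ x ∈ Ω, ‖fderiv ℝ (fderiv ℝ ρ) x‖ ≤ C₂ * (ρ x)⁻¹) →
      ∀ x ∈ Ω,
        ‖fderiv ℝ (fderiv ℝ (fun y => Real.sqrt (ρ y ^ 2 + h ^ 2))) x‖ ≤
          c * (Real.sqrt (ρ x ^ 2 + h ^ 2))⁻¹ := by
  refine ⟨C₁ ^ 2 + C₂ + 1, by positivity, ?_⟩
  intro Ω hΩ ρ h hh hpos hd1 hd2 hb1 hb2 x hx
  -- derivative of t ↦ √(t²+h²)
  have hg : ∀ t : ℝ, HasDerivAt (fun t => Real.sqrt (t ^ 2 + h ^ 2))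
      (t / Real.sqrt (t ^ 2 + h ^ 2)) t := by
    intro t
    have hs : (0:ℝ) < t ^ 2 + h ^ 2 := by positivity
    have hσ : (0:ℝ) < Real.sqrt (t ^ 2 + h ^ 2) := Real.sqrt_pos.2 hs
    have h1 : HasDerivAt (fun t : ℝ => t ^ 2 + h ^ 2) (2 * t) t := by
      simpa using (hasDerivAt_pow 2 t).add_const (h ^ 2)
    have h2 := (Real.hasDerivAt_sqrt hs.ne').comp t h1
    refine h2.congr_deriv ?_
    field_simp
  -- derivative of t ↦ t/√(t²+h²)
  have hk : ∀ t : ℝ, HasDerivAt (fun t => t / Real.sqrt (t ^ 2 + h ^ 2))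
      (h ^ 2 / Real.sqrt (t ^ 2 + h ^ 2) ^ 3) t := by
    intro t
    have hs : (0:ℝ) < t ^ 2 + h ^ 2 := by positivity
    have hσ : (0:ℝ) < Real.sqrt (t ^ 2 + h ^ 2) := Real.sqrt_pos.2 hs
    have hsq : Real.sqrt (t ^ 2 + h ^ 2) ^ 2 = t ^ 2 + h ^ 2 := Real.sq_sqrt hs.le
    have := (hasDerivAt_id t).div (hg t) hσ.ne'
    refine this.congr_deriv ?_
    field_simp
    simp only [id]
    linear_combination hsq
  -- first derivative of ρ̃ on Ω
  have hF : ∀ y ∈ Ω, HasFDerivAt (fun y => Real.sqrt (ρ y ^ 2 + h ^ 2))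
      ((ρ y / Real.sqrt (ρ y ^ 2 + h ^ 2)) • fderiv ℝ ρ y) y := fun y hy =>
    (hg (ρ y)).comp_hasFDerivAt y (hd1 y hy).hasFDerivAt
  have heq : fderiv ℝ (fun y => Real.sqrt (ρ y ^ 2 + h ^ 2)) =ᶠ[nhds x]
      fun y => (ρ y / Real.sqrt (ρ y ^ 2 + h ^ 2)) • fderiv ℝ ρ y := by
    filter_upwards [hΩ.mem_nhds hx] with y hy
    exact (hF y hy).fderiv
  -- second derivative at x
  have hφ : HasFDerivAt (fun y => ρ y / Real.sqrt (ρ y ^ 2 + h ^ 2))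
      ((h ^ 2 / Real.sqrt (ρ x ^ 2 + h ^ 2) ^ 3) • fderiv ℝ ρ x) x :=
    (hk (ρ x)).comp_hasFDerivAt x (hd1 x hx).hasFDerivAt
  have hG : HasFDerivAt (fderiv ℝ ρ) (fderiv ℝ (fderiv ℝ ρ) x) x :=
    (hd2 x hx).hasFDerivAt
  have hB := hφ.smul hG
  have key : fderiv ℝ (fderiv ℝ (fun y => Real.sqrt (ρ y ^ 2 + h ^ 2))) x
      = (ρ x / Real.sqrt (ρ x ^ 2 + h ^ 2)) • fderiv ℝ (fderiv ℝ ρ) x +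
        ((h ^ 2 / Real.sqrt (ρ x ^ 2 + h ^ 2) ^ 3) • fderiv ℝ ρ x).smulRight
          (fderiv ℝ ρ x) := by
    rw [heq.fderiv_eq]
    exact hB.fderiv
  -- arithmetic
  have hs : (0:ℝ) < ρ x ^ 2 + h ^ 2 := by positivity
  set σ := Real.sqrt (ρ x ^ 2 + h ^ 2) with hσdef
  have hσ : 0 < σ := Real.sqrt_pos.2 hs
  have hsq : σ ^ 2 = ρ x ^ 2 + h ^ 2 := Real.sq_sqrt hs.le
  have hr : 0 < ρ x := hpos x hx
  clear_value σ
  rw [key]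
  have n1 : ‖(ρ x / σ) • fderiv ℝ (fderiv ℝ ρ) x‖ ≤ (ρ x / σ) * (C₂ * (ρ x)⁻¹) := by
    refine ((fderiv ℝ (fderiv ℝ ρ) x).opNorm_smul_le (ρ x / σ)).trans ?_
    rw [Real.norm_eq_abs, abs_of_pos (by positivity)]
    exact mul_le_mul_of_nonneg_left (hb2 x hx) (by positivity)
  have n2 : ‖((h ^ 2 / σ ^ 3) • fderiv ℝ ρ x).smulRight (fderiv ℝ ρ x)‖ ≤
      (h ^ 2 / σ ^ 3) * C₁ * C₁ := by
    rw [ContinuousLinearMap.norm_smulRight_apply,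
      norm_smul (h ^ 2 / σ ^ 3) (fderiv ℝ ρ x), Real.norm_eq_abs,
      abs_of_pos (show (0:ℝ) < h ^ 2 / σ ^ 3 by positivity)]
    have h1 := hb1 x hx
    have h0 : (0:ℝ) ≤ ‖fderiv ℝ ρ x‖ := norm_nonneg _
    have hc : (0:ℝ) ≤ h ^ 2 / σ ^ 3 := by positivity
    calc h ^ 2 / σ ^ 3 * ‖fderiv ℝ ρ x‖ * ‖fderiv ℝ ρ x‖
        = h ^ 2 / σ ^ 3 * (‖fderiv ℝ ρ x‖ * ‖fderiv ℝ ρ x‖) := by ring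
      _ ≤ h ^ 2 / σ ^ 3 * (C₁ * C₁) :=
          mul_le_mul_of_nonneg_left (mul_le_mul h1 h1 h0 hC₁) hc
      _ = h ^ 2 / σ ^ 3 * C₁ * C₁ := by ring
  calc ‖(ρ x / σ) • fderiv ℝ (fderiv ℝ ρ) x +
        ((h ^ 2 / σ ^ 3) • fderiv ℝ ρ x).smulRight (fderiv ℝ ρ x)‖
      ≤ (ρ x / σ) * (C₂ * (ρ x)⁻¹) + (h ^ 2 / σ ^ 3) * C₁ * C₁ :=
        le_trans (ContinuousLinearMap.opNorm_add_le _ _) (add_le_add n1 n2)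
    _ ≤ (C₁ ^ 2 + C₂ + 1) * σ⁻¹ := by
        have e1 : (ρ x / σ) * (C₂ * (ρ x)⁻¹) = C₂ * σ⁻¹ := by
          field_simp
        have hd : h ^ 2 / σ ^ 3 ≤ σ⁻¹ := by
          rw [div_le_iff₀ (show (0:ℝ) < σ ^ 3 by positivity)]
          have h3 : σ⁻¹ * σ ^ 3 = σ ^ 2 := by
            field_simp
          rw [h3, hsq]
          linarith [sq_nonneg (ρ x)]
        have e2 : (h ^ 2 / σ ^ 3) * C₁ * C₁ ≤ C₁ ^ 2 * σ⁻¹ := by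
          calc (h ^ 2 / σ ^ 3) * C₁ * C₁ = (h ^ 2 / σ ^ 3) * (C₁ * C₁) := by ring
            _ ≤ σ⁻¹ * (C₁ * C₁) :=
                mul_le_mul_of_nonneg_right hd (by positivity)
            _ = C₁ ^ 2 * σ⁻¹ := by ring
        rw [e1]
        have hσi : (0:ℝ) < σ⁻¹ := inv_pos.2 hσ
        nlinarith [e2]
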